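/- Let p ≥ 2 be an integer and let φ : HahnSeries ℚ K → HahnSeries ℚ K be the map sending a Hahn series f(z) to f(z^p) (i.e., the coefficient of f(z^p) at γ equals the coefficient of f at γ/p). If f is a Hahn series whose support is contained in ℚ_{<0}, then the family (φ^{-k}(f))_{k ≥ 1} is summable, i.e., the union of the supports of the φ^{-k}(f) for k ≥ 1 is well-ordered, and each γ ∈ ℚ belongs to the support of only finitely many φ^{-k}(f). -/

import Mathlib

/-- Let `p ≥ 2` and let `g k` denote `φ^{-k}(f)`, i.e. the Hahn series with
coefficient at `γ` equal to the coefficient of `f` at `p^k · γ` (so that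
`(g k)(z) = f(z^{p^{-k}})`).  If the support of `f` is contained in the negative rationals,
then the family `(g k)_{k ≥ 1}` is summable: the union of the supports is well-ordered and
each `γ` lies in the support of only finitely many `g k`. -/
theorem stmt2 (K : Type*) [Field K] (p : ℕ) (hp : 2 ≤ p)
    (f : HahnSeries ℚ K) (hf : f.support ⊆ {γ : ℚ | γ < 0})
    (g : ℕ → HahnSeries ℚ K)
    (hg : ∀ (k : ℕ) (γ : ℚ), (g k).coeff γ = f.coeff ((p : ℚ) ^ k * γ)) :
    (⋃ k ∈ {k : ℕ | 1 ≤ k}, (g k).support).IsWF ∧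
    ∀ γ : ℚ, ({k : ℕ | 1 ≤ k ∧ γ ∈ (g k).support}).Finite := by
  have hppos : (0:ℚ) < (p:ℚ) := by
    have : 0 < p := by omega
    exact_mod_cast this
  have key : ∀ k γ, γ ∈ (g k).support → (p:ℚ)^k * γ ∈ f.support := by
    intro k γ hγ
    simp only [HahnSeries.mem_support] at hγ ⊢
    rwa [hg k γ] at hγ
  have keyneg : ∀ k γ, γ ∈ (g k).support → γ < 0 := by
    intro k γ hγ
    have h1 : (p:ℚ)^k * γ < 0 := hf (key k γ hγ)
    have h2 : (0:ℚ) < (p:ℚ)^k := pow_pos hppos k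
    nlinarith
  by_cases hf0 : f = 0
  · have hz : ∀ k, g k = 0 := by
      intro k
      ext γ
      rw [hg k γ, hf0]
      simp
    constructor
    · have : (⋃ k ∈ {k : ℕ | 1 ≤ k}, (g k).support) = ∅ := by
        simp [hz]
      rw [this]; exact Set.isWF_empty
    · intro γ
      have : {k : ℕ | 1 ≤ k ∧ γ ∈ (g k).support} = ∅ := by
        ext k; simp [hz]
      rw [this]; exact Set.finite_empty
  · have hfne : f.support.Nonempty := HahnSeries.support_nonempty_iff.mpr hf0
    set m := f.isWF_support.min hfne with hm_def
    have hmin : ∀ x ∈ f.support, m ≤ x := fun x hx => f.isWF_support.min_le hfne hx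
    have bound : ∀ c : ℚ, c < 0 → ∃ M : ℕ, ∀ k γ, γ ∈ (g k).support → γ ≤ c → k ≤ M := by
      intro c hc
      obtain ⟨M, hM⟩ := exists_nat_ge (m / c)
      refine ⟨M, fun k γ hγ hγc => ?_⟩
      have h1 : m ≤ (p:ℚ)^k * γ := hmin _ (key k γ hγ)
      have hpk : (0:ℚ) < (p:ℚ)^k := pow_pos hppos k
      have h2 : (p:ℚ)^k ≤ m / c := by
        rw [le_div_iff_of_neg hc]
        nlinarith
      have h3 : ((p^k : ℕ):ℚ) ≤ (M:ℚ) := by push_cast; linarith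
      have h4 : p^k ≤ M := by exact_mod_cast h3
      have h5 : k < p^k := Nat.lt_pow_self (by omega : 1 < p)
      omega
    constructor
    · rw [Set.isWF_iff_no_descending_seq]
      intro x hx hxs
      have hmem : ∀ n : ℕ, ∃ k, 1 ≤ k ∧ x n ∈ (g k).support := by
        intro n
        have := hxs n
        simpa using this
      choose k hk1 hk2 using hmem
      have hx0 : ∀ n, x n ≤ x 0 := fun n => hx.antitone (Nat.zero_le n)
      have hx0neg : x 0 < 0 := keyneg _ _ (hk2 0)
      obtain ⟨M, hM⟩ := bound (x 0) hx0neg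
      have hkM : ∀ n, k n ≤ M := fun n => hM (k n) (x n) (hk2 n) (hx0 n)
      have hfib : ∃ j, {n | k n = j}.Infinite := by
        by_contra h
        push_neg at h
        have huniv : (Set.univ : Set ℕ) ⊆ ⋃ j ∈ Finset.range (M+1), {n | k n = j} := by
          intro n _
          simp only [Set.mem_iUnion, Finset.mem_range]
          exact ⟨k n, by have := hkM n; omega, rfl⟩
        have : (Set.univ : Set ℕ).Finite :=
          (Set.Finite.biUnion (Finset.range (M+1)).finite_toSet (fun j _ => h j)).subset huniv
        exact Set.infinite_univ this
      obtain ⟨j, hj⟩ := hfib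
      have hy : StrictAnti (fun n => (p:ℚ)^j * x (Nat.nth (fun n => k n = j) n)) := by
        intro a b hab
        have h1 : Nat.nth (fun n => k n = j) a < Nat.nth (fun n => k n = j) b :=
          Nat.nth_strictMono hj hab
        have h2 : x (Nat.nth (fun n => k n = j) b) < x (Nat.nth (fun n => k n = j) a) := hx h1
        have hpk : (0:ℚ) < (p:ℚ)^j := pow_pos hppos j
        exact (mul_lt_mul_iff_right₀ hpk).mpr h2
      have hall : ∀ n : ℕ, (p:ℚ)^j * x (Nat.nth (fun n => k n = j) n) ∈ f.support := by
        intro n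
        have hkj : k (Nat.nth (fun n => k n = j) n) = j := Nat.nth_mem_of_infinite hj n
        have := key _ _ (hk2 (Nat.nth (fun n => k n = j) n))
        rwa [hkj] at this
      exact (Set.isWF_iff_no_descending_seq.mp f.isWF_support) _ hy hall
    · intro γ
      by_cases hγ : γ < 0
      · obtain ⟨M, hM⟩ := bound γ hγ
        apply Set.Finite.subset (Set.finite_Iic M)
        rintro k ⟨_, hk2⟩
        exact hM k γ hk2 le_rfl
      · have : {k : ℕ | 1 ≤ k ∧ γ ∈ (g k).support} = ∅ := by
          ext k
          simp only [Set.mem_setOf_eq, Set.mem_empty_iff_false, iff_false, not_and]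
          intro _ hkγ
          exact hγ (keyneg k γ hkγ)
        rw [this]; exact Set.finite_empty
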